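/- Let L be a finite distributive strong upper semilattice. The map ν : L → D given by ν(x) = {m ∈ M | x ≤ m} preserves all meets that exist in L: for all x, y, w ∈ L, if IsGLB {x, y} w then ν(w) = ν(x) ∪ ν(y) (union being the meet of D). -/
import Mathlib

/-- A strong upper semilattice: any two elements with a common lower bound
have a greatest lower bound. -/
def StrongUpper (L : Type*) [SemilatticeSup L] : Prop :=
  ∀ x y : L, (∃ z, z ≤ x ∧ z ≤ y) → ∃ w, IsGLB {x, y} w

/-- Every interval is a distributive lattice. -/
def IntervalDistrib (L : Type*) [SemilatticeSup L] : Prop :=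
  ∀ a x y z w w' : L, a ≤ x → a ≤ y → a ≤ z →
    IsGLB {x, y} w → IsGLB {x ⊔ z, y ⊔ z} w' → w' = w ⊔ z

/-- Meet-irreducible element. -/
def MeetIrred {L : Type*} [SemilatticeSup L] [OrderTop L] (m : L) : Prop :=
  m ≠ ⊤ ∧ ∀ p q : L, IsGLB {p, q} m → m = p ∨ m = q

theorem nu_preserves_glb {L : Type*} [SemilatticeSup L] [OrderTop L] [Finite L]
    (hS : StrongUpper L) (hD : IntervalDistrib L)
    (x y w : L) (hw : IsGLB {x, y} w) :
    {m : L | MeetIrred m ∧ w ≤ m} =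
      {m : L | MeetIrred m ∧ x ≤ m} ∪ {m : L | MeetIrred m ∧ y ≤ m} := by
  have hwx : w ≤ x := hw.1 (by simp)
  have hwy : w ≤ y := hw.1 (by simp)
  ext m
  simp only [Set.mem_setOf_eq, Set.mem_union]
  constructor
  · rintro ⟨hm, hwm⟩
    obtain ⟨w', hw'⟩ := hS (x ⊔ m) (y ⊔ m) ⟨m, le_sup_right, le_sup_right⟩
    have heq : w' = w ⊔ m := hD w x y m w w' hwx hwy hwm hw hw'
    have hm' : w' = m := by rw [heq, sup_eq_right.mpr hwm]
    rcases hm.2 (x ⊔ m) (y ⊔ m) (hm' ▸ hw') with h | h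
    · exact Or.inl ⟨hm, le_sup_left.trans h.symm.le⟩
    · exact Or.inr ⟨hm, le_sup_left.trans h.symm.le⟩
  · rintro (⟨hm, hxm⟩ | ⟨hm, hym⟩)
    · exact ⟨hm, hwx.trans hxm⟩
    · exact ⟨hm, hwy.trans hym⟩
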